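/- For every x ∈ U and all indices μ, ν ∈ {1,2,3}: Σ_γ [ ∂_{x^γ} E_μ{}^{νγ} + Σ_α Γ^α{}_{γα} E_μ{}^{νγ} − Σ_α Γ^α{}_{γμ} E_α{}^{νγ} − Σ_α Γ^ν{}_{γα} E_μ{}^{αγ} ] = 0; equivalently, the subprincipal symbol [curl_sub]_μ{}^ν = (1/2) Σ_γ [ ∂_{x^γ} E_μ{}^{νγ} + Σ_α Γ^α{}_{γα} E_μ{}^{νγ} − Σ_α Γ^α{}_{γμ} E_α{}^{νγ} − Σ_α Γ^ν{}_{γα} E_μ{}^{αγ} ] of the operator curl vanishes identically (Lemma 3.3 of the paper). -/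

import Mathlib

noncomputable section

/-- The totally antisymmetric symbol on three indices, with `ε_{123} = 1`. -/
def epsSym (i j k : Fin 3) : ℝ :=
  if (i, j, k) = (0, 1, 2) ∨ (i, j, k) = (1, 2, 0) ∨ (i, j, k) = (2, 0, 1) then 1
  else if (i, j, k) = (2, 1, 0) ∨ (i, j, k) = (1, 0, 2) ∨ (i, j, k) = (0, 2, 1) then -1
  else 0

/-- The partial derivative `∂_{x^γ} f` of a scalar function on `ℝ³`. -/
def pd (γ : Fin 3) (f : (Fin 3 → ℝ) → ℝ) (x : Fin 3 → ℝ) : ℝ :=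
  fderiv ℝ f x (Pi.single γ 1)

/-- The entries `g^{αβ}` of the inverse metric. -/
def invMetric (g : (Fin 3 → ℝ) → Fin 3 → Fin 3 → ℝ) (x : Fin 3 → ℝ) :
    Matrix (Fin 3) (Fin 3) ℝ :=
  (Matrix.of (g x))⁻¹

/-- The Christoffel symbols
`Γ^α{}_{βγ} := (1/2) Σ_δ g^{αδ}(∂_β g_{δγ} + ∂_γ g_{δβ} − ∂_δ g_{βγ})`. -/
def christoffel (g : (Fin 3 → ℝ) → Fin 3 → Fin 3 → ℝ) (α β γ : Fin 3)
    (x : Fin 3 → ℝ) : ℝ :=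
  (1 / 2) * ∑ δ, invMetric g x α δ *
    (pd β (fun y => g y δ γ) x + pd γ (fun y => g y δ β) x - pd δ (fun y => g y β γ) x)

/-- The tensor `E_α{}^{βγ} := Σ_{μ,ν} g^{βμ} g^{γν} ρ ε_{αμν}` with `ρ := √(det g)`. -/
def Eud (g : (Fin 3 → ℝ) → Fin 3 → Fin 3 → ℝ) (α β γ : Fin 3) (x : Fin 3 → ℝ) : ℝ :=
  ∑ μ, ∑ ν, invMetric g x β μ * invMetric g x γ ν *
    (Real.sqrt (Matrix.of (g x)).det * epsSym α μ ν)

@[simp] private lemma eps000 : epsSym 0 0 0 = 0 := by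
  unfold epsSym; norm_num [Prod.ext_iff, Fin.ext_iff]
@[simp] private lemma eps001 : epsSym 0 0 1 = 0 := by
  unfold epsSym; norm_num [Prod.ext_iff, Fin.ext_iff]
@[simp] private lemma eps002 : epsSym 0 0 2 = 0 := by
  unfold epsSym; norm_num [Prod.ext_iff, Fin.ext_iff]
@[simp] private lemma eps010 : epsSym 0 1 0 = 0 := by
  unfold epsSym; norm_num [Prod.ext_iff, Fin.ext_iff]
@[simp] private lemma eps011 : epsSym 0 1 1 = 0 := by
  unfold epsSym; norm_num [Prod.ext_iff, Fin.ext_iff]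
@[simp] private lemma eps012 : epsSym 0 1 2 = 1 := by
  unfold epsSym; norm_num [Prod.ext_iff, Fin.ext_iff]
@[simp] private lemma eps020 : epsSym 0 2 0 = 0 := by
  unfold epsSym; norm_num [Prod.ext_iff, Fin.ext_iff]
@[simp] private lemma eps021 : epsSym 0 2 1 = -1 := by
  unfold epsSym; norm_num [Prod.ext_iff, Fin.ext_iff]
@[simp] private lemma eps022 : epsSym 0 2 2 = 0 := by
  unfold epsSym; norm_num [Prod.ext_iff, Fin.ext_iff]
@[simp] private lemma eps100 : epsSym 1 0 0 = 0 := by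
  unfold epsSym; norm_num [Prod.ext_iff, Fin.ext_iff]
@[simp] private lemma eps101 : epsSym 1 0 1 = 0 := by
  unfold epsSym; norm_num [Prod.ext_iff, Fin.ext_iff]
@[simp] private lemma eps102 : epsSym 1 0 2 = -1 := by
  unfold epsSym; norm_num [Prod.ext_iff, Fin.ext_iff]
@[simp] private lemma eps110 : epsSym 1 1 0 = 0 := by
  unfold epsSym; norm_num [Prod.ext_iff, Fin.ext_iff]
@[simp] private lemma eps111 : epsSym 1 1 1 = 0 := by
  unfold epsSym; norm_num [Prod.ext_iff, Fin.ext_iff]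
@[simp] private lemma eps112 : epsSym 1 1 2 = 0 := by
  unfold epsSym; norm_num [Prod.ext_iff, Fin.ext_iff]
@[simp] private lemma eps120 : epsSym 1 2 0 = 1 := by
  unfold epsSym; norm_num [Prod.ext_iff, Fin.ext_iff]
@[simp] private lemma eps121 : epsSym 1 2 1 = 0 := by
  unfold epsSym; norm_num [Prod.ext_iff, Fin.ext_iff]
@[simp] private lemma eps122 : epsSym 1 2 2 = 0 := by
  unfold epsSym; norm_num [Prod.ext_iff, Fin.ext_iff]
@[simp] private lemma eps200 : epsSym 2 0 0 = 0 := by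
  unfold epsSym; norm_num [Prod.ext_iff, Fin.ext_iff]
@[simp] private lemma eps201 : epsSym 2 0 1 = 1 := by
  unfold epsSym; norm_num [Prod.ext_iff, Fin.ext_iff]
@[simp] private lemma eps202 : epsSym 2 0 2 = 0 := by
  unfold epsSym; norm_num [Prod.ext_iff, Fin.ext_iff]
@[simp] private lemma eps210 : epsSym 2 1 0 = -1 := by
  unfold epsSym; norm_num [Prod.ext_iff, Fin.ext_iff]
@[simp] private lemma eps211 : epsSym 2 1 1 = 0 := by
  unfold epsSym; norm_num [Prod.ext_iff, Fin.ext_iff]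
@[simp] private lemma eps212 : epsSym 2 1 2 = 0 := by
  unfold epsSym; norm_num [Prod.ext_iff, Fin.ext_iff]
@[simp] private lemma eps220 : epsSym 2 2 0 = 0 := by
  unfold epsSym; norm_num [Prod.ext_iff, Fin.ext_iff]
@[simp] private lemma eps221 : epsSym 2 2 1 = 0 := by
  unfold epsSym; norm_num [Prod.ext_iff, Fin.ext_iff]
@[simp] private lemma eps222 : epsSym 2 2 2 = 0 := by
  unfold epsSym; norm_num [Prod.ext_iff, Fin.ext_iff]

private lemma pd_congr {f₁ f₂ : (Fin 3 → ℝ) → ℝ} {x : Fin 3 → ℝ}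
    (h : f₁ =ᶠ[nhds x] f₂) (γ : Fin 3) : pd γ f₁ x = pd γ f₂ x := by
  unfold pd; rw [h.fderiv_eq]

private lemma pd_hasFDeriv {f : (Fin 3 → ℝ) → ℝ} {f' : (Fin 3 → ℝ) →L[ℝ] ℝ}
    {x : Fin 3 → ℝ} (h : HasFDerivAt f f' x) (γ : Fin 3) :
    pd γ f x = f' (Pi.single γ 1) := by
  unfold pd; rw [h.fderiv]

set_option maxHeartbeats 1000000 in
private lemma coreA (M : Matrix (Fin 3) (Fin 3) ℝ) (μ ν γ : Fin 3) :
    ∑ a, ∑ b, M.adjugate ν a * M.adjugate γ b * epsSym μ a b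
      = M.det * ∑ δ, M μ δ * epsSym δ ν γ := by
  have hA := Matrix.adjugate_fin_three M
  fin_cases μ <;> fin_cases ν <;> fin_cases γ <;>
  · simp [Fin.sum_univ_three, hA, Matrix.det_fin_three]
    try ring

private lemma invMetric_eq (g : (Fin 3 → ℝ) → Fin 3 → Fin 3 → ℝ) (y : Fin 3 → ℝ)
    (i j : Fin 3) :
    invMetric g y i j = ((Matrix.of (g y)).det)⁻¹ * (Matrix.of (g y)).adjugate i j := by
  show (Matrix.of (g y))⁻¹ i j = _
  rw [Matrix.inv_def]
  simp [Ring.inverse_eq_inv]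

private lemma lemA (g : (Fin 3 → ℝ) → Fin 3 → Fin 3 → ℝ) (y : Fin 3 → ℝ)
    (hpos : (Matrix.of (g y)).PosDef) (α β γ : Fin 3) :
    Eud g α β γ y
      = (Real.sqrt (Matrix.of (g y)).det)⁻¹ * ∑ δ, g y α δ * epsSym δ β γ := by
  have hd : (0:ℝ) < (Matrix.of (g y)).det := hpos.det_pos
  have hd0 : (Matrix.of (g y)).det ≠ 0 := hd.ne'
  have hs0 : Real.sqrt ((Matrix.of (g y)).det) ≠ 0 := (Real.sqrt_pos.mpr hd).ne'
  have hB : ∀ i j : Fin 3, invMetric g y i j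
      = ((Matrix.of (g y)).det)⁻¹ * (Matrix.of (g y)).adjugate i j := by
    intro i j
    show (Matrix.of (g y))⁻¹ i j = _
    rw [Matrix.inv_def]
    simp [Ring.inverse_eq_inv]
  calc Eud g α β γ y
      = ∑ a, ∑ b, (((Matrix.of (g y)).det)⁻¹ * (Matrix.of (g y)).adjugate β a)
          * (((Matrix.of (g y)).det)⁻¹ * (Matrix.of (g y)).adjugate γ b)
          * (Real.sqrt ((Matrix.of (g y)).det) * epsSym α a b) := by
        simp only [Eud, hB]
    _ = (Real.sqrt ((Matrix.of (g y)).det) * ((Matrix.of (g y)).det)⁻¹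
          * ((Matrix.of (g y)).det)⁻¹)
          * ∑ a, ∑ b, (Matrix.of (g y)).adjugate β a * (Matrix.of (g y)).adjugate γ b
              * epsSym α a b := by
        rw [Finset.mul_sum]
        refine Finset.sum_congr rfl fun a _ => ?_
        rw [Finset.mul_sum]
        refine Finset.sum_congr rfl fun b _ => ?_
        ring
    _ = (Real.sqrt ((Matrix.of (g y)).det) * ((Matrix.of (g y)).det)⁻¹
          * ((Matrix.of (g y)).det)⁻¹)
          * ((Matrix.of (g y)).det * ∑ δ, (Matrix.of (g y)) α δ * epsSym δ β γ) := by
        rw [coreA]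
    _ = (Real.sqrt (Matrix.of (g y)).det)⁻¹ * ∑ δ, g y α δ * epsSym δ β γ := by
        have he : ∑ δ, (Matrix.of (g y)) α δ * epsSym δ β γ
            = ∑ δ, g y α δ * epsSym δ β γ := rfl
        rw [he]
        field_simp
        linear_combination (∑ δ : Fin 3, g y α δ * epsSym δ β γ) *
          Real.mul_self_sqrt hd.le

set_option maxHeartbeats 4000000 in
/-- **Lemma 3.3 of the paper**: for a smooth Riemannian metric `g` on an open set
`U ⊆ ℝ³`, for every `x ∈ U` and all indices `μ, ν`,
`Σ_γ [∂_{x^γ} E_μ{}^{νγ} + Σ_α Γ^α{}_{γα} E_μ{}^{νγ} − Σ_α Γ^α{}_{γμ} E_α{}^{νγ}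
  − Σ_α Γ^ν{}_{γα} E_μ{}^{αγ}] = 0`;
equivalently, the subprincipal symbol of the operator `curl` vanishes identically. -/
theorem subprincipal_symbol_of_curl_vanishes (U : Set (Fin 3 → ℝ)) (hU : IsOpen U)
    (g : (Fin 3 → ℝ) → Fin 3 → Fin 3 → ℝ)
    (hg : ∀ α β, ContDiffOn ℝ (⊤ : ℕ∞) (fun x => g x α β) U)
    (hgsym : ∀ x ∈ U, ∀ α β, g x α β = g x β α)
    (hgpos : ∀ x ∈ U, (Matrix.of (g x)).PosDef) :
    ∀ x ∈ U, ∀ μ ν : Fin 3,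
      ∑ γ, (pd γ (fun y => Eud g μ ν γ y) x
          + (∑ α, christoffel g α γ α x * Eud g μ ν γ x)
          - (∑ α, christoffel g α γ μ x * Eud g α ν γ x)
          - (∑ α, christoffel g ν γ α x * Eud g μ α γ x)) = 0 := by
  intro x hx μ ν
  have hmem : U ∈ nhds x := hU.mem_nhds hx
  have hdg : ∀ i j : Fin 3, DifferentiableAt ℝ (fun y => g y i j) x :=
    fun i j => ((hg i j).contDiffAt hmem).differentiableAt (by simp)
  have hdx : (0:ℝ) < (Matrix.of (g x)).det := (hgpos x hx).det_pos
  have hD0 : ((Matrix.of (g x)).det) ≠ 0 := hdx.ne'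
  have hs0 : Real.sqrt ((Matrix.of (g x)).det) ≠ 0 := (Real.sqrt_pos.mpr hdx).ne'
  have hs2' : Real.sqrt ((Matrix.of (g x)).det) ^ 2 = (Matrix.of (g x)).det := Real.sq_sqrt hdx.le
  have hsd : (Real.sqrt ((Matrix.of (g x)).det))⁻¹ = Real.sqrt ((Matrix.of (g x)).det) * ((Matrix.of (g x)).det)⁻¹ := by
    field_simp
    exact hs2'.symm
  have h1 := ((hdg 0 0).hasFDerivAt.mul (hdg 1 1).hasFDerivAt).mul (hdg 2 2).hasFDerivAt
  have h2 := ((hdg 0 0).hasFDerivAt.mul (hdg 1 2).hasFDerivAt).mul (hdg 2 1).hasFDerivAt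
  have h3 := ((hdg 0 1).hasFDerivAt.mul (hdg 1 0).hasFDerivAt).mul (hdg 2 2).hasFDerivAt
  have h4 := ((hdg 0 1).hasFDerivAt.mul (hdg 1 2).hasFDerivAt).mul (hdg 2 0).hasFDerivAt
  have h5 := ((hdg 0 2).hasFDerivAt.mul (hdg 1 0).hasFDerivAt).mul (hdg 2 1).hasFDerivAt
  have h6 := ((hdg 0 2).hasFDerivAt.mul (hdg 1 1).hasFDerivAt).mul (hdg 2 0).hasFDerivAt
  have hdet := (((((h1.sub h2).sub h3).add h4).add h5).sub h6).congr_of_eventuallyEq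
      (Filter.Eventually.of_forall fun y => Matrix.det_fin_three (Matrix.of (g y)))
  have hsq := hdet.sqrt hdx.ne'
  have key : ∀ γ' : Fin 3, pd γ' (fun y => Eud g μ ν γ' y) x =
      (Real.sqrt ((Matrix.of (g x)).det))⁻¹ *
        (pd γ' (fun y => g y μ 0) x * epsSym 0 ν γ' + pd γ' (fun y => g y μ 1) x * epsSym 1 ν γ'
          + pd γ' (fun y => g y μ 2) x * epsSym 2 ν γ')
      - (Real.sqrt ((Matrix.of (g x)).det) ^ 2)⁻¹ * (1 / (2 * Real.sqrt ((Matrix.of (g x)).det))) *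
        (pd γ' (fun y => g y 0 0) x * g x 1 1 * g x 2 2 + g x 0 0 * pd γ' (fun y => g y 1 1) x * g x 2 2 + g x 0 0 * g x 1 1 * pd γ' (fun y => g y 2 2) x - pd γ' (fun y => g y 0 0) x * g x 1 2 * g x 2 1 - g x 0 0 * pd γ' (fun y => g y 1 2) x * g x 2 1 - g x 0 0 * g x 1 2 * pd γ' (fun y => g y 2 1) x - pd γ' (fun y => g y 0 1) x * g x 1 0 * g x 2 2 - g x 0 1 * pd γ' (fun y => g y 1 0) x * g x 2 2 - g x 0 1 * g x 1 0 * pd γ' (fun y => g y 2 2) x + pd γ' (fun y => g y 0 1) x * g x 1 2 * g x 2 0 + g x 0 1 * pd γ' (fun y => g y 1 2) x * g x 2 0 + g x 0 1 * g x 1 2 * pd γ' (fun y => g y 2 0) x + pd γ' (fun y => g y 0 2) x * g x 1 0 * g x 2 1 + g x 0 2 * pd γ' (fun y => g y 1 0) x * g x 2 1 + g x 0 2 * g x 1 0 * pd γ' (fun y => g y 2 1) x - pd γ' (fun y => g y 0 2) x * g x 1 1 * g x 2 0 - g x 0 2 * pd γ' (fun y => g y 1 1) x * g x 2 0 - g x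 0 2 * g x 1 1 * pd γ' (fun y => g y 2 0) x) *
        (g x μ 0 * epsSym 0 ν γ' + g x μ 1 * epsSym 1 ν γ' + g x μ 2 * epsSym 2 ν γ') := by
    intro γ'
    have EV : (fun y => Eud g μ ν γ' y) =ᶠ[nhds x]
        (fun y => (Real.sqrt ((Matrix.of (g y)).det))⁻¹ *
          (g y μ 0 * epsSym 0 ν γ' + g y μ 1 * epsSym 1 ν γ' + g y μ 2 * epsSym 2 ν γ')) :=
      Filter.eventuallyEq_of_mem hmem fun y hy => by
        rw [lemA g y (hgpos y hy), Fin.sum_univ_three]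
    have hF := (((hdg μ 0).hasFDerivAt.mul_const (epsSym 0 ν γ')).add
        ((hdg μ 1).hasFDerivAt.mul_const (epsSym 1 ν γ'))).add
        ((hdg μ 2).hasFDerivAt.mul_const (epsSym 2 ν γ'))
    have hphi := ((hasDerivAt_inv hs0).comp_hasFDerivAt x hsq).mul hF
    have hphi' := hphi.congr_of_eventuallyEq
        (f₁ := fun y => (Real.sqrt ((Matrix.of (g y)).det))⁻¹ *
          (g y μ 0 * epsSym 0 ν γ' + g y μ 1 * epsSym 1 ν γ' + g y μ 2 * epsSym 2 ν γ'))
        (Filter.Eventually.of_forall fun _ => rfl)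
    rw [pd_congr EV γ', pd_hasFDeriv hphi' γ']
    simp only [Function.comp_apply, ContinuousLinearMap.add_apply,
      ContinuousLinearMap.sub_apply, ContinuousLinearMap.smul_apply,
      ContinuousLinearMap.coe_sub', Pi.sub_apply, Pi.mul_apply, Pi.add_apply, smul_eq_mul, pd]
    ring
  have hE : ∀ a b c : Fin 3, Eud g a b c x = (Real.sqrt ((Matrix.of (g x)).det))⁻¹ *
      (g x a 0 * epsSym 0 b c + g x a 1 * epsSym 1 b c + g x a 2 * epsSym 2 b c) :=
    fun a b c => by rw [lemA g x (hgpos x hx), Fin.sum_univ_three]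
  have hg10 : g x 1 0 = g x 0 1 := hgsym x hx 1 0
  have hg20 : g x 2 0 = g x 0 2 := hgsym x hx 2 0
  have hg21 : g x 2 1 = g x 1 2 := hgsym x hx 2 1
  have hpd10 : ∀ γ' : Fin 3, pd γ' (fun y => g y 1 0) x = pd γ' (fun y => g y 0 1) x :=
    fun γ' => pd_congr (Filter.eventuallyEq_of_mem hmem fun y hy => hgsym y hy 1 0) γ'
  have hpd20 : ∀ γ' : Fin 3, pd γ' (fun y => g y 2 0) x = pd γ' (fun y => g y 0 2) x :=
    fun γ' => pd_congr (Filter.eventuallyEq_of_mem hmem fun y hy => hgsym y hy 2 0) γ'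
  have hpd21 : ∀ γ' : Fin 3, pd γ' (fun y => g y 2 1) x = pd γ' (fun y => g y 1 2) x :=
    fun γ' => pd_congr (Filter.eventuallyEq_of_mem hmem fun y hy => hgsym y hy 2 1) γ'
  have hswap : ∀ (γ0 i : Fin 3), pd γ0 (fun y => g y i μ) x = pd γ0 (fun y => g y μ i) x :=
    fun γ0 i => pd_congr (Filter.eventuallyEq_of_mem hmem fun y hy => hgsym y hy i μ) γ0
  have ed : ∀ (i w : Fin 3), epsSym i w i = 0 := by
    intro i w; fin_cases i <;> fin_cases w <;> simp
  have es10 : ∀ w : Fin 3, epsSym 1 w 0 = -epsSym 0 w 1 := by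
    intro w; fin_cases w <;> simp
  have es20 : ∀ w : Fin 3, epsSym 2 w 0 = -epsSym 0 w 2 := by
    intro w; fin_cases w <;> simp
  have es21 : ∀ w : Fin 3, epsSym 2 w 1 = -epsSym 1 w 2 := by
    intro w; fin_cases w <;> simp
  have hdetP : (Matrix.of (g x)).det =
      g x 0 0 * g x 1 1 * g x 2 2 - g x 0 0 * g x 1 2 * g x 1 2
        - g x 0 1 * g x 0 1 * g x 2 2 + 2 * (g x 0 1 * g x 1 2 * g x 0 2)
        - g x 0 2 * g x 0 2 * g x 1 1 := by
    rw [Matrix.det_fin_three]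
    simp only [Matrix.of_apply]
    rw [hg10, hg20, hg21]
    ring
  have hP0 : (g x 0 0 * g x 1 1 * g x 2 2 - g x 0 0 * g x 1 2 * g x 1 2
        - g x 0 1 * g x 0 1 * g x 2 2 + 2 * (g x 0 1 * g x 1 2 * g x 0 2)
        - g x 0 2 * g x 0 2 * g x 1 1) ≠ 0 := (hdetP ▸ hdx).ne'
  have hAdj := Matrix.adjugate_fin_three (Matrix.of (g x))
  have T1 : pd 0 (fun y => Eud g μ ν 0 y) x + pd 1 (fun y => Eud g μ ν 1 y) x + pd 2 (fun y => Eud g μ ν 2 y) x =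
      Real.sqrt ((Matrix.of (g x)).det) * ((Matrix.of (g x)).det)⁻¹ * (- pd 0 (fun y => g y μ 1) x * epsSym 0 ν 1 - pd 0 (fun y => g y μ 2) x * epsSym 0 ν 2 + pd 1 (fun y => g y μ 0) x * epsSym 0 ν 1 - pd 1 (fun y => g y μ 2) x * epsSym 1 ν 2 + pd 2 (fun y => g y μ 0) x * epsSym 0 ν 2 + pd 2 (fun y => g y μ 1) x * epsSym 1 ν 2) - Real.sqrt ((Matrix.of (g x)).det) * ((Matrix.of (g x)).det)⁻¹ * ((Matrix.of (g x)).det)⁻¹ * (1/2) * ((pd 0 (fun y => g y 0 0) x * g x 1 1 * g x 2 2 + g x 0 0 * pd 0 (fun y => g y 1 1) x * g x 2 2 + g x 0 0 * g x 1 1 * pd 0 (fun y => g y 2 2) x - pd 0 (fun y => g y 0 0) x * g x 1 2 * g x 1 2 - g x 0 0 * pd 0 (fun y => g y 1 2) x * g x 1 2 - g x 0 0 * g x 1 2 * pd 0 (fun y => g y 1 2) x - pd 0 (fun y => g y 0 1) x * g x 0 1 * g x 2 2 - g x 0 1 * pd 0 (fun y => g y 0 1) x * g x 2 2 - g x 0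 1 * g x 0 1 * pd 0 (fun y => g y 2 2) x + pd 0 (fun y => g y 0 1) x * g x 1 2 * g x 0 2 + g x 0 1 * pd 0 (fun y => g y 1 2) x * g x 0 2 + g x 0 1 * g x 1 2 * pd 0 (fun y => g y 0 2) x + pd 0 (fun y => g y 0 2) x * g x 0 1 * g x 1 2 + g x 0 2 * pd 0 (fun y => g y 0 1) x * g x 1 2 + g x 0 2 * g x 0 1 * pd 0 (fun y => g y 1 2) x - pd 0 (fun y => g y 0 2) x * g x 1 1 * g x 0 2 - g x 0 2 * pd 0 (fun y => g y 1 1) x * g x 0 2 - g x 0 2 * g x 1 1 * pd 0 (fun y => g y 0 2) x) * (- g x μ 1 * epsSym 0 ν 1 - g x μ 2 * epsSym 0 ν 2) + (pd 1 (fun y => g y 0 0) x * g x 1 1 * g x 2 2 + g x 0 0 * pd 1 (fun y => g y 1 1) x * g x 2 2 + g x 0 0 * g x 1 1 * pd 1 (fun y => g y 2 2) x - pd 1 (fun y => g y 0 0) x * g x 1 2 * g x 1 2 - g x 0 0 * pd 1 (fun y => g y 1 2) x * g x 1 2 - g x 0 0 * g x 1 2 * pd 1 (fun y => g y 1 2)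 x - pd 1 (fun y => g y 0 1) x * g x 0 1 * g x 2 2 - g x 0 1 * pd 1 (fun y => g y 0 1) x * g x 2 2 - g x 0 1 * g x 0 1 * pd 1 (fun y => g y 2 2) x + pd 1 (fun y => g y 0 1) x * g x 1 2 * g x 0 2 + g x 0 1 * pd 1 (fun y => g y 1 2) x * g x 0 2 + g x 0 1 * g x 1 2 * pd 1 (fun y => g y 0 2) x + pd 1 (fun y => g y 0 2) x * g x 0 1 * g x 1 2 + g x 0 2 * pd 1 (fun y => g y 0 1) x * g x 1 2 + g x 0 2 * g x 0 1 * pd 1 (fun y => g y 1 2) x - pd 1 (fun y => g y 0 2) x * g x 1 1 * g x 0 2 - g x 0 2 * pd 1 (fun y => g y 1 1) x * g x 0 2 - g x 0 2 * g x 1 1 * pd 1 (fun y => g y 0 2) x) * (g x μ 0 * epsSym 0 ν 1 - g x μ 2 * epsSym 1 ν 2) + (pd 2 (fun y => g y 0 0) x * g x 1 1 * g x 2 2 + g x 0 0 * pd 2 (fun y => g y 1 1) x * g x 2 2 + g x 0 0 * g x 1 1 * pd 2 (fun y => g y 2 2) x - pd 2 (fun y => g y 0 0) x * g x 1 2 *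 g x 1 2 - g x 0 0 * pd 2 (fun y => g y 1 2) x * g x 1 2 - g x 0 0 * g x 1 2 * pd 2 (fun y => g y 1 2) x - pd 2 (fun y => g y 0 1) x * g x 0 1 * g x 2 2 - g x 0 1 * pd 2 (fun y => g y 0 1) x * g x 2 2 - g x 0 1 * g x 0 1 * pd 2 (fun y => g y 2 2) x + pd 2 (fun y => g y 0 1) x * g x 1 2 * g x 0 2 + g x 0 1 * pd 2 (fun y => g y 1 2) x * g x 0 2 + g x 0 1 * g x 1 2 * pd 2 (fun y => g y 0 2) x + pd 2 (fun y => g y 0 2) x * g x 0 1 * g x 1 2 + g x 0 2 * pd 2 (fun y => g y 0 1) x * g x 1 2 + g x 0 2 * g x 0 1 * pd 2 (fun y => g y 1 2) x - pd 2 (fun y => g y 0 2) x * g x 1 1 * g x 0 2 - g x 0 2 * pd 2 (fun y => g y 1 1) x * g x 0 2 - g x 0 2 * g x 1 1 * pd 2 (fun y => g y 0 2) x) * (g x μ 0 * epsSym 0 ν 2 + g x μ 1 * epsSym 1 ν 2)) := by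
    rw [key 0, key 1, key 2]
    simp only [hs2', one_div, mul_inv, hsd]
    simp only [hpd10, hpd20, hpd21, hswap, hg10, hg20, hg21, ed, es10, es20, es21]
    ring
  have T2 : christoffel g 0 0 0 x * Eud g μ ν 0 x + christoffel g 1 0 1 x * Eud g μ ν 0 x + christoffel g 2 0 2 x * Eud g μ ν 0 x + christoffel g 0 1 0 x * Eud g μ ν 1 x + christoffel g 1 1 1 x * Eud g μ ν 1 x + christoffel g 2 1 2 x * Eud g μ ν 1 x + christoffel g 0 2 0 x * Eud g μ ν 2 x + christoffel g 1 2 1 x * Eud g μ ν 2 x + christoffel g 2 2 2 x * Eud g μ ν 2 x =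
      Real.sqrt ((Matrix.of (g x)).det) * ((Matrix.of (g x)).det)⁻¹ * ((Matrix.of (g x)).det)⁻¹ * (1/2) * ((pd 0 (fun y => g y 0 0) x * g x 1 1 * g x 2 2 + g x 0 0 * pd 0 (fun y => g y 1 1) x * g x 2 2 + g x 0 0 * g x 1 1 * pd 0 (fun y => g y 2 2) x - pd 0 (fun y => g y 0 0) x * g x 1 2 * g x 1 2 - g x 0 0 * pd 0 (fun y => g y 1 2) x * g x 1 2 - g x 0 0 * g x 1 2 * pd 0 (fun y => g y 1 2) x - pd 0 (fun y => g y 0 1) x * g x 0 1 * g x 2 2 - g x 0 1 * pd 0 (fun y => g y 0 1) x * g x 2 2 - g x 0 1 * g x 0 1 * pd 0 (fun y => g y 2 2) x + pd 0 (fun y => g y 0 1) x * g x 1 2 * g x 0 2 + g x 0 1 * pd 0 (fun y => g y 1 2) x * g x 0 2 + g x 0 1 * g x 1 2 * pd 0 (fun y => g y 0 2) x + pd 0 (fun y => g y 0 2) x * g x 0 1 * g x 1 2 + g x 0 2 * pd 0 (fun y => g y 0 1) x * g x 1 2 + g x 0 2 * g x 0 1 * pd 0 (fun y => g y 1 2)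 x - pd 0 (fun y => g y 0 2) x * g x 1 1 * g x 0 2 - g x 0 2 * pd 0 (fun y => g y 1 1) x * g x 0 2 - g x 0 2 * g x 1 1 * pd 0 (fun y => g y 0 2) x) * (- g x μ 1 * epsSym 0 ν 1 - g x μ 2 * epsSym 0 ν 2) + (pd 1 (fun y => g y 0 0) x * g x 1 1 * g x 2 2 + g x 0 0 * pd 1 (fun y => g y 1 1) x * g x 2 2 + g x 0 0 * g x 1 1 * pd 1 (fun y => g y 2 2) x - pd 1 (fun y => g y 0 0) x * g x 1 2 * g x 1 2 - g x 0 0 * pd 1 (fun y => g y 1 2) x * g x 1 2 - g x 0 0 * g x 1 2 * pd 1 (fun y => g y 1 2) x - pd 1 (fun y => g y 0 1) x * g x 0 1 * g x 2 2 - g x 0 1 * pd 1 (fun y => g y 0 1) x * g x 2 2 - g x 0 1 * g x 0 1 * pd 1 (fun y => g y 2 2) x + pd 1 (fun y => g y 0 1) x * g x 1 2 * g x 0 2 + g x 0 1 * pd 1 (fun y => g y 1 2) x * g x 0 2 + g x 0 1 * g x 1 2 * pd 1 (fun y => g y 0 2) x + pd 1 (fun y => g y 0 2) x * g x 0 1 *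 g x 1 2 + g x 0 2 * pd 1 (fun y => g y 0 1) x * g x 1 2 + g x 0 2 * g x 0 1 * pd 1 (fun y => g y 1 2) x - pd 1 (fun y => g y 0 2) x * g x 1 1 * g x 0 2 - g x 0 2 * pd 1 (fun y => g y 1 1) x * g x 0 2 - g x 0 2 * g x 1 1 * pd 1 (fun y => g y 0 2) x) * (g x μ 0 * epsSym 0 ν 1 - g x μ 2 * epsSym 1 ν 2) + (pd 2 (fun y => g y 0 0) x * g x 1 1 * g x 2 2 + g x 0 0 * pd 2 (fun y => g y 1 1) x * g x 2 2 + g x 0 0 * g x 1 1 * pd 2 (fun y => g y 2 2) x - pd 2 (fun y => g y 0 0) x * g x 1 2 * g x 1 2 - g x 0 0 * pd 2 (fun y => g y 1 2) x * g x 1 2 - g x 0 0 * g x 1 2 * pd 2 (fun y => g y 1 2) x - pd 2 (fun y => g y 0 1) x * g x 0 1 * g x 2 2 - g x 0 1 * pd 2 (fun y => g y 0 1) x * g x 2 2 - g x 0 1 * g x 0 1 * pd 2 (fun y => g y 2 2) x + pd 2 (fun y => g y 0 1) x * g x 1 2 * g x 0 2 + g x 0 1 * pd 2 (fun y => g y 1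 2) x * g x 0 2 + g x 0 1 * g x 1 2 * pd 2 (fun y => g y 0 2) x + pd 2 (fun y => g y 0 2) x * g x 0 1 * g x 1 2 + g x 0 2 * pd 2 (fun y => g y 0 1) x * g x 1 2 + g x 0 2 * g x 0 1 * pd 2 (fun y => g y 1 2) x - pd 2 (fun y => g y 0 2) x * g x 1 1 * g x 0 2 - g x 0 2 * pd 2 (fun y => g y 1 1) x * g x 0 2 - g x 0 2 * g x 1 1 * pd 2 (fun y => g y 0 2) x) * (g x μ 0 * epsSym 0 ν 2 + g x μ 1 * epsSym 1 ν 2)) := by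
    simp only [hE, christoffel, invMetric_eq, hAdj, Matrix.of_apply, Fin.sum_univ_three,
      Matrix.cons_val', Matrix.cons_val_zero, Matrix.cons_val_one, Matrix.head_cons,
      Matrix.empty_val', Matrix.cons_val_fin_one, Matrix.head_fin_const, Matrix.cons_val_two,
      Matrix.tail_cons]
    simp only [one_div, mul_inv, hsd]
    simp only [hpd10, hpd20, hpd21, hswap, hg10, hg20, hg21, ed, es10, es20, es21]
    field_simp
    ring
  have T3_0 : christoffel g 0 0 μ x * Eud g 0 ν 0 x + christoffel g 1 0 μ x * Eud g 1 ν 0 x + christoffel g 2 0 μ x * Eud g 2 ν 0 x =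
      Real.sqrt ((Matrix.of (g x)).det) * ((Matrix.of (g x)).det)⁻¹ * (- (1/2) * (pd 0 (fun y => g y μ 1) x + pd μ (fun y => g y 0 1) x - pd 1 (fun y => g y μ 0) x) * epsSym 0 ν 1 - (1/2) * (pd 0 (fun y => g y μ 2) x + pd μ (fun y => g y 0 2) x - pd 2 (fun y => g y μ 0) x) * epsSym 0 ν 2) := by
    simp only [hE, christoffel, invMetric_eq, hAdj, Matrix.of_apply, Fin.sum_univ_three,
      Matrix.cons_val', Matrix.cons_val_zero, Matrix.cons_val_one, Matrix.head_cons,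
      Matrix.empty_val', Matrix.cons_val_fin_one, Matrix.head_fin_const, Matrix.cons_val_two,
      Matrix.tail_cons]
    simp only [one_div, mul_inv, hsd]
    simp only [hpd10, hpd20, hpd21, hswap, hg10, hg20, hg21, ed, es10, es20, es21]
    field_simp
    rw [hdetP]
    ring
  have T3_1 : christoffel g 0 1 μ x * Eud g 0 ν 1 x + christoffel g 1 1 μ x * Eud g 1 ν 1 x + christoffel g 2 1 μ x * Eud g 2 ν 1 x =
      Real.sqrt ((Matrix.of (g x)).det) * ((Matrix.of (g x)).det)⁻¹ * ((1/2) * (pd 1 (fun y => g y μ 0) x + pd μ (fun y => g y 0 1) x - pd 0 (fun y => g y μ 1) x) * epsSym 0 ν 1 - (1/2) * (pd 1 (fun y => g y μ 2) x + pd μ (fun y => g y 1 2) x - pd 2 (fun y => g y μ 1) x) * epsSym 1 ν 2) := by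
    simp only [hE, christoffel, invMetric_eq, hAdj, Matrix.of_apply, Fin.sum_univ_three,
      Matrix.cons_val', Matrix.cons_val_zero, Matrix.cons_val_one, Matrix.head_cons,
      Matrix.empty_val', Matrix.cons_val_fin_one, Matrix.head_fin_const, Matrix.cons_val_two,
      Matrix.tail_cons]
    simp only [one_div, mul_inv, hsd]
    simp only [hpd10, hpd20, hpd21, hswap, hg10, hg20, hg21, ed, es10, es20, es21]
    field_simp
    rw [hdetP]
    ring
  have T3_2 : christoffel g 0 2 μ x * Eud g 0 ν 2 x + christoffel g 1 2 μ x * Eud g 1 ν 2 x + christoffel g 2 2 μ x * Eud g 2 ν 2 x =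
      Real.sqrt ((Matrix.of (g x)).det) * ((Matrix.of (g x)).det)⁻¹ * ((1/2) * (pd 2 (fun y => g y μ 0) x + pd μ (fun y => g y 0 2) x - pd 0 (fun y => g y μ 2) x) * epsSym 0 ν 2 + (1/2) * (pd 2 (fun y => g y μ 1) x + pd μ (fun y => g y 1 2) x - pd 1 (fun y => g y μ 2) x) * epsSym 1 ν 2) := by
    simp only [hE, christoffel, invMetric_eq, hAdj, Matrix.of_apply, Fin.sum_univ_three,
      Matrix.cons_val', Matrix.cons_val_zero, Matrix.cons_val_one, Matrix.head_cons,
      Matrix.empty_val', Matrix.cons_val_fin_one, Matrix.head_fin_const, Matrix.cons_val_two,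
      Matrix.tail_cons]
    simp only [one_div, mul_inv, hsd]
    simp only [hpd10, hpd20, hpd21, hswap, hg10, hg20, hg21, ed, es10, es20, es21]
    field_simp
    rw [hdetP]
    ring
  have T4 : christoffel g ν 0 0 x * Eud g μ 0 0 x + christoffel g ν 0 1 x * Eud g μ 1 0 x + christoffel g ν 0 2 x * Eud g μ 2 0 x + christoffel g ν 1 0 x * Eud g μ 0 1 x + christoffel g ν 1 1 x * Eud g μ 1 1 x + christoffel g ν 1 2 x * Eud g μ 2 1 x + christoffel g ν 2 0 x * Eud g μ 0 2 x + christoffel g ν 2 1 x * Eud g μ 1 2 x + christoffel g ν 2 2 x * Eud g μ 2 2 x = 0 := by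
    simp only [hE, christoffel, Fin.sum_univ_three, eps000, eps001, eps002, eps010, eps011, eps012, eps020, eps021, eps022, eps100, eps101, eps102, eps110, eps111, eps112, eps120, eps121, eps122, eps200, eps201, eps202, eps210, eps211, eps212, eps220, eps221, eps222]
    simp only [one_div, mul_inv, hsd]
    simp only [hpd10, hpd20, hpd21, hswap, hg10, hg20, hg21, ed, es10, es20, es21]
    ring
  simp only [Fin.sum_univ_three]
  linear_combination T1 + T2 - T3_0 - T3_1 - T3_2 - T4
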